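/- Let E be a PBES containing an equation σX(d⃗:D) = ξ, let φ be a subformula of ξ whose free data variables are among d⃗, and let X̃ be a predicate variable not occurring in E. Then the PBES E' obtained from E by replacing the occurrence of φ in ξ by X̃(d⃗) and inserting the new equation σX̃(d⃗:D) = φ into the same block as the equation for X satisfies E' ≡ E: every predicate variable bound in E has the same solution in E' as in E. -/

import Mathlib

/-!
Parameterised Boolean Equation Systems (PBESs) and the substitution lemma:
replacing a subformula `φ` of a right-hand side by a call `X̃(d⃗)` to a fresh
equation `σ X̃(d⃗:D) = φ` (inserted in the same block) preserves the solution.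

Predicate variables are natural numbers.  Data variables are natural numbers
as well: a data environment is a valuation `ε : ℕ → Dv` of the data
variables, and the parameter vector `d⃗` of an equation is the whole
valuation.  Data terms are represented semantically: a data term of sort
`Bool` is a function `(ℕ → Dv) → Prop`, and the parameter vector `e⃗` of a
variable instantiation `X(e⃗)` is a function `(ℕ → Dv) → (ℕ → Dv)`.  A
quantifier `∀ i. φ` / `∃ i. φ` binds the data variable `i` by updating the
valuation at `i`.
-/

namespace PBES

/-- Predicate formulae
`φ ::= b | X(e⃗) | φ ∧ φ | φ ∨ φ | ∀ d:D. φ | ∃ d:D. φ`. -/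
inductive PF (Dv : Type) : Type
  | simple : ((ℕ → Dv) → Prop) → PF Dv
  | var    : ℕ → ((ℕ → Dv) → (ℕ → Dv)) → PF Dv
  | and    : PF Dv → PF Dv → PF Dv
  | or     : PF Dv → PF Dv → PF Dv
  | all    : ℕ → PF Dv → PF Dv
  | ex     : ℕ → PF Dv → PF Dv

variable {Dv : Type}

/-- Predicate environments. -/
abbrev PEnv (Dv : Type) := ℕ → (ℕ → Dv) → Prop

/-- Semantics of predicate formulae. -/
def sem : PF Dv → PEnv Dv → (ℕ → Dv) → Prop
  | .simple b, _, ε => b ε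
  | .var x e, η, ε => η x (e ε)
  | .and φ ψ, η, ε => sem φ η ε ∧ sem ψ η ε
  | .or φ ψ, η, ε => sem φ η ε ∨ sem ψ η ε
  | .all i φ, η, ε => ∀ v : Dv, sem φ η (Function.update ε i v)
  | .ex i φ, η, ε => ∃ v : Dv, sem φ η (Function.update ε i v)

/-- An equation `σ X(d⃗:D) = φ`; `sign = true` encodes `μ`,
`sign = false` encodes `ν`.  Blocks of a PBES are maximal subsequences of
consecutive equations with the same sign. -/
structure Eqn (Dv : Type) : Type where
  sign : Bool
  name : ℕ
  rhs : PF Dv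

/-- The least fixed point of `f` on a complete lattice
(for monotone `f` this is the usual least fixed point). -/
def lfp' {α : Type _} [CompleteLattice α] (f : α → α) : α :=
  sInf {a | f a ≤ a}

/-- The greatest fixed point of `f` on a complete lattice. -/
def gfp' {α : Type _} [CompleteLattice α] (f : α → α) : α :=
  sSup {a | a ≤ f a}

/-- The solution of a PBES: the equations are solved in sequence order with
earlier equations outermost; each equation `σ X(d⃗) = φ` is solved as the
least (`μ`) or greatest (`ν`) fixed point of the map induced by `φ` on the
complete lattice `(ℕ → Dv) → Prop`, in the environment determined by the
surrounding equations. -/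
def solve : List (Eqn Dv) → PEnv Dv → PEnv Dv
  | [], η => η
  | e :: E, η =>
    solve E (Function.update η e.name
      (if e.sign then
        lfp' (fun p => sem e.rhs (solve E (Function.update η e.name p)))
       else
        gfp' (fun p => sem e.rhs (solve E (Function.update η e.name p)))))

/-- `occurs y φ`: the predicate variable `y` occurs in `φ`. -/
def occurs (y : ℕ) : PF Dv → Prop
  | .simple _ => False
  | .var x _ => x = y
  | .and φ ψ => occurs y φ ∨ occurs y ψ
  | .or φ ψ => occurs y φ ∨ occurs y ψ
  | .all _ φ => occurs y φ
  | .ex _ φ => occurs y φ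

/-- One-hole contexts for predicate formulae: `ξ = C.fill φ` exhibits `φ` as
(an occurrence of) a subformula of `ξ`. -/
inductive Ctx (Dv : Type) : Type
  | hole : Ctx Dv
  | andL : Ctx Dv → PF Dv → Ctx Dv
  | andR : PF Dv → Ctx Dv → Ctx Dv
  | orL  : Ctx Dv → PF Dv → Ctx Dv
  | orR  : PF Dv → Ctx Dv → Ctx Dv
  | all  : ℕ → Ctx Dv → Ctx Dv
  | ex   : ℕ → Ctx Dv → Ctx Dv

/-- Filling the hole of a context with a formula. -/
def Ctx.fill : Ctx Dv → PF Dv → PF Dv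
  | .hole, φ => φ
  | .andL C ψ, φ => .and (C.fill φ) ψ
  | .andR ψ C, φ => .and ψ (C.fill φ)
  | .orL C ψ, φ => .or (C.fill φ) ψ
  | .orR ψ C, φ => .or ψ (C.fill φ)
  | .all i C, φ => .all i (C.fill φ)
  | .ex i C, φ => .ex i (C.fill φ)

/-- The data variables bound by quantifiers above the hole of a context. -/
def Ctx.binders : Ctx Dv → Set ℕ
  | .hole => ∅
  | .andL C _ => C.binders
  | .andR _ C => C.binders
  | .orL C _ => C.binders
  | .orR _ C => C.binders
  | .all i C => insert i C.binders
  | .ex i C => insert i C.binders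

/-! Auxiliary lemmas. -/

lemma occurs_fill {y : ℕ} {C : Ctx Dv} {φ : PF Dv} (h : occurs y φ) :
    occurs y (C.fill φ) := by
  induction C with
  | hole => exact h
  | andL C ψ ih => exact Or.inl ih
  | andR ψ C ih => exact Or.inr ih
  | orL C ψ ih => exact Or.inl ih
  | orR ψ C ih => exact Or.inr ih
  | all i C ih => exact ih
  | ex i C ih => exact ih

lemma sem_congr {ψ : PF Dv} {η η' : PEnv Dv}
    (h : ∀ z, occurs z ψ → η z = η' z) : sem ψ η = sem ψ η' := by
  induction ψ with
  | simple b => rfl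
  | var x e => funext ε; simp only [sem, h x rfl]
  | and φ ψ ih1 ih2 =>
    funext ε
    simp only [sem, ih1 (fun z hz => h z (Or.inl hz)),
      ih2 (fun z hz => h z (Or.inr hz))]
  | or φ ψ ih1 ih2 =>
    funext ε
    simp only [sem, ih1 (fun z hz => h z (Or.inl hz)),
      ih2 (fun z hz => h z (Or.inr hz))]
  | all i φ ih => funext ε; simp only [sem, ih h]
  | ex i φ ih => funext ε; simp only [sem, ih h]

lemma sem_update_not_occurs {ψ : PF Dv} {xt : ℕ} (h : ¬ occurs xt ψ)
    (ρ : PEnv Dv) (c : (ℕ → Dv) → Prop) :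
    sem ψ (Function.update ρ xt c) = sem ψ ρ :=
  sem_congr fun z hz => Function.update_of_ne (fun e => h (by subst e; exact hz)) _ _

lemma solve_not_mem {E : List (Eqn Dv)} {z : ℕ} (h : z ∉ E.map Eqn.name)
    (η : PEnv Dv) : solve E η z = η z := by
  induction E generalizing η with
  | nil => rfl
  | cons e E ih =>
    simp only [List.map_cons, List.mem_cons, not_or] at h
    rw [solve, ih h.2, Function.update_of_ne h.1]

lemma solve_update_fresh {E : List (Eqn Dv)} {xt : ℕ}
    (h1 : xt ∉ E.map Eqn.name) (h2 : ∀ e ∈ E, ¬ occurs xt e.rhs)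
    (η : PEnv Dv) (q : (ℕ → Dv) → Prop) :
    solve E (Function.update η xt q) = Function.update (solve E η) xt q := by
  induction E generalizing η with
  | nil => rfl
  | cons e E ih =>
    simp only [List.map_cons, List.mem_cons, not_or] at h1
    have hne : e.name ≠ xt := fun h => h1.1 h.symm
    have h2' : ∀ e' ∈ E, ¬ occurs xt e'.rhs :=
      fun e' he' => h2 e' (List.mem_cons_of_mem _ he')
    have hocc : ¬ occurs xt e.rhs := h2 e List.mem_cons_self
    have key : ∀ p, solve E (Function.update (Function.update η xt q) e.name p)
        = Function.update (solve E (Function.update η e.name p)) xt q := by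
      intro p
      rw [Function.update_comm (Ne.symm hne), ih h1.2 h2']
    have hfun : (fun p => sem e.rhs
          (solve E (Function.update (Function.update η xt q) e.name p)))
        = fun p => sem e.rhs (solve E (Function.update η e.name p)) := by
      funext p
      rw [key p, sem_update_not_occurs hocc]
    rw [solve, solve, hfun, Function.update_comm (Ne.symm hne), ih h1.2 h2']

lemma lfp'_const {α : Type _} [CompleteLattice α] (c : α) :
    lfp' (fun _ => c) = c :=
  le_antisymm (sInf_le le_rfl) (le_sInf fun _ ha => ha)

lemma gfp'_const {α : Type _} [CompleteLattice α] (c : α) :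
    gfp' (fun _ => c) = c :=
  le_antisymm (sSup_le fun _ ha => ha) (le_sSup le_rfl)

lemma sem_fill {C : Ctx Dv} {φ : PF Dv} {xt : ℕ} (h : ¬ occurs xt (C.fill φ))
    (ρ : PEnv Dv) :
    sem (C.fill (.var xt fun ε => ε)) (Function.update ρ xt (sem φ ρ))
      = sem (C.fill φ) ρ := by
  induction C with
  | hole => funext ε; simp [Ctx.fill, sem]
  | andL C ψ ih =>
    have h1 : ¬ occurs xt (C.fill φ) := fun hh => h (Or.inl hh)
    have h2 : ¬ occurs xt ψ := fun hh => h (Or.inr hh)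
    funext ε
    simp only [Ctx.fill, sem, ih h1, sem_update_not_occurs h2]
  | andR ψ C ih =>
    have h1 : ¬ occurs xt (C.fill φ) := fun hh => h (Or.inr hh)
    have h2 : ¬ occurs xt ψ := fun hh => h (Or.inl hh)
    funext ε
    simp only [Ctx.fill, sem, ih h1, sem_update_not_occurs h2]
  | orL C ψ ih =>
    have h1 : ¬ occurs xt (C.fill φ) := fun hh => h (Or.inl hh)
    have h2 : ¬ occurs xt ψ := fun hh => h (Or.inr hh)
    funext ε
    simp only [Ctx.fill, sem, ih h1, sem_update_not_occurs h2]
  | orR ψ C ih =>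
    have h1 : ¬ occurs xt (C.fill φ) := fun hh => h (Or.inr hh)
    have h2 : ¬ occurs xt ψ := fun hh => h (Or.inl hh)
    funext ε
    simp only [Ctx.fill, sem, ih h1, sem_update_not_occurs h2]
  | all i C ih => funext ε; simp only [Ctx.fill, sem, ih h]
  | ex i C ih => funext ε; simp only [Ctx.fill, sem, ih h]

lemma solve_insert {E₂ : List (Eqn Dv)} {σ : Bool} {xt : ℕ} {C : Ctx Dv}
    {φ : PF Dv}
    (hfresh2 : xt ∉ E₂.map Eqn.name) (hocc2 : ∀ e ∈ E₂, ¬ occurs xt e.rhs)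
    (hoccξ : ¬ occurs xt (C.fill φ)) (x : ℕ) :
    ∀ E₁ : List (Eqn Dv), xt ∉ E₁.map Eqn.name →
      (∀ e ∈ E₁, ¬ occurs xt e.rhs) →
      ∀ (η : PEnv Dv) (z : ℕ), z ≠ xt →
      solve (E₁ ++ ⟨σ, x, C.fill (.var xt fun ε => ε)⟩ :: ⟨σ, xt, φ⟩ :: E₂) η z
        = solve (E₁ ++ ⟨σ, x, C.fill φ⟩ :: E₂) η z := by
  have hφ : ¬ occurs xt φ := fun hh => hoccξ (occurs_fill hh)
  have tail : ∀ η'' : PEnv Dv, solve (⟨σ, xt, φ⟩ :: E₂) η''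
      = Function.update (solve E₂ η'') xt (sem φ (solve E₂ η'')) := by
    intro η''
    have hconst : (fun q => sem φ (solve E₂ (Function.update η'' xt q)))
        = fun _ => sem φ (solve E₂ η'') := by
      funext q
      rw [solve_update_fresh hfresh2 hocc2, sem_update_not_occurs hφ]
    show solve E₂ (Function.update η'' xt _) = _
    rw [hconst, lfp'_const, gfp'_const, ite_self,
      solve_update_fresh hfresh2 hocc2]
  intro E₁
  induction E₁ with
  | nil =>
    intro _ _ η z hz
    show solve (⟨σ, xt, φ⟩ :: E₂) (Function.update η x _) z
        = solve E₂ (Function.update η x _) z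
    have hfun : (fun p => sem (C.fill (.var xt fun ε => ε))
          (solve (⟨σ, xt, φ⟩ :: E₂) (Function.update η x p)))
        = fun p => sem (C.fill φ) (solve E₂ (Function.update η x p)) := by
      funext p
      rw [tail, sem_fill hoccξ]
    rw [hfun, tail, Function.update_of_ne hz]
  | cons e E₁ ih =>
    intro h1 h2 η z hz
    simp only [List.map_cons, List.mem_cons, not_or] at h1
    have h2' : ∀ e' ∈ E₁, ¬ occurs xt e'.rhs :=
      fun e' he' => h2 e' (List.mem_cons_of_mem _ he')
    have hocc : ¬ occurs xt e.rhs := h2 e List.mem_cons_self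
    have ih' := ih (fun hh => h1.2 hh) h2'
    have hfun : (fun p => sem e.rhs
          (solve (E₁ ++ ⟨σ, x, C.fill (.var xt fun ε => ε)⟩ ::
            ⟨σ, xt, φ⟩ :: E₂) (Function.update η e.name p)))
        = fun p => sem e.rhs
          (solve (E₁ ++ ⟨σ, x, C.fill φ⟩ :: E₂) (Function.update η e.name p))
        := by
      funext p
      exact sem_congr fun w hw =>
        ih' _ w (fun he => hocc (he ▸ hw))
    show solve (E₁ ++ _ :: _ :: E₂) (Function.update η e.name _) z
        = solve (E₁ ++ _ :: E₂) (Function.update η e.name _) z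
    simp only [List.append_eq]
    rw [hfun]
    exact ih' _ z hz

/-- **Introducing an equation for a subformula preserves the solution.**
Let `E = E₁ ++ (σ X(d⃗:D) = ξ) :: E₂` be a PBES (with pairwise distinct
left-hand side variables), let `φ` be a subformula of `ξ` (an occurrence
`ξ = C.fill φ`) whose free data variables are among `d⃗` (i.e. `φ` is
independent of the data variables bound by quantifiers above the hole of
`C`), and let `X̃` be a predicate variable not occurring in `E`.  Then the
PBES `E'` obtained from `E` by replacing the occurrence of `φ` in `ξ` by
`X̃(d⃗)` and inserting the new equation `σ X̃(d⃗:D) = φ` into the same block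
as the equation for `X` satisfies `E' ≡ E`: every predicate variable bound in
`E` has the same solution in `E'` as in `E` (under every predicate
environment `η`). -/
theorem subformula_substitution_preserves_solution
    (E₁ E₂ : List (Eqn Dv)) (σ : Bool) (x : ℕ) (C : Ctx Dv) (φ : PF Dv)
    (xt : ℕ)
    (hnodup : ((E₁ ++ ⟨σ, x, C.fill φ⟩ :: E₂).map Eqn.name).Nodup)
    (hfresh_lhs : xt ∉ (E₁ ++ ⟨σ, x, C.fill φ⟩ :: E₂).map Eqn.name)
    (hfresh_occ : ∀ e ∈ E₁ ++ (⟨σ, x, C.fill φ⟩ : Eqn Dv) :: E₂,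
      ¬ occurs xt e.rhs)
    (hfree : ∀ i ∈ C.binders, ∀ (η : PEnv Dv) (ε : ℕ → Dv) (v : Dv),
      sem φ η (Function.update ε i v) = sem φ η ε)
    (η : PEnv Dv) (y : ℕ)
    (hy : y ∈ (E₁ ++ ⟨σ, x, C.fill φ⟩ :: E₂).map Eqn.name) :
    solve (E₁ ++ ⟨σ, x, C.fill (.var xt fun ε => ε)⟩ :: ⟨σ, xt, φ⟩ :: E₂) η y
      = solve (E₁ ++ ⟨σ, x, C.fill φ⟩ :: E₂) η y := by
  have hmid : (⟨σ, x, C.fill φ⟩ : Eqn Dv) ∈ E₁ ++ (⟨σ, x, C.fill φ⟩ : Eqn Dv) :: E₂ :=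
    List.mem_append_right _ List.mem_cons_self
  have hoccξ : ¬ occurs xt (C.fill φ) := hfresh_occ _ hmid
  simp only [List.map_append, List.map_cons, List.mem_append, List.mem_cons,
    not_or] at hfresh_lhs
  have hocc1 : ∀ e ∈ E₁, ¬ occurs xt e.rhs :=
    fun e he => hfresh_occ e (List.mem_append_left _ he)
  have hocc2 : ∀ e ∈ E₂, ¬ occurs xt e.rhs :=
    fun e he => hfresh_occ e
      (List.mem_append_right _ (List.mem_cons_of_mem _ he))
  have hyne : y ≠ xt := by
    rintro rfl
    simp only [List.map_append, List.map_cons, List.mem_append,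
      List.mem_cons] at hy
    rcases hy with h | h | h
    · exact hfresh_lhs.1 h
    · exact hfresh_lhs.2.1 h
    · exact hfresh_lhs.2.2 h
  exact solve_insert (by simpa using hfresh_lhs.2.2) hocc2 hoccξ x E₁
    (by simpa using hfresh_lhs.1) hocc1 η y hyne

end PBES
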